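/- Viewing z³ − 6z² + 3z + 1 and f(z,w) as polynomials in z over ℤ[w] (each of degree 3 in z), one has Res_z( z³ − 6z² + 3z + 1, f(z,w) ) = (w³ − 6w² + 3w + 1)³. -/

import Mathlib

open Polynomial

/-- The Sylvester matrix of two polynomials `p`, `q` (with respect to their
natural degrees): the first `q.natDegree` rows contain the coefficients of `p`
in descending order, the remaining `p.natDegree` rows those of `q`. -/
noncomputable def sylvester {R : Type*} [CommRing R] (p q : R[X]) :
    Matrix (Fin (p.natDegree + q.natDegree)) (Fin (p.natDegree + q.natDegree)) R :=
  Matrix.of fun i j =>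
    if (i : ℕ) < q.natDegree then
      (if (i : ℕ) ≤ (j : ℕ) ∧ (j : ℕ) ≤ p.natDegree + (i : ℕ) then
        p.coeff (p.natDegree + (i : ℕ) - (j : ℕ)) else 0)
    else
      (if (i : ℕ) - q.natDegree ≤ (j : ℕ) ∧ (j : ℕ) ≤ q.natDegree + ((i : ℕ) - q.natDegree) then
        q.coeff (q.natDegree + ((i : ℕ) - q.natDegree) - (j : ℕ)) else 0)

/-- The resultant of two polynomials, i.e. the determinant of their Sylvester matrix. -/
noncomputable def resultant {R : Type*} [CommRing R] (p q : R[X]) : R :=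
  (_root_.sylvester p q).det

/-- `f(z,w) = w³ + (−z³+6z²−6z−1)w² + (z³−3z²+3z+1)w − z³`. -/
def fpoly {R : Type*} [CommRing R] (z w : R) : R :=
  w ^ 3 + (-z ^ 3 + 6 * z ^ 2 - 6 * z - 1) * w ^ 2 + (z ^ 3 - 3 * z ^ 2 + 3 * z + 1) * w - z ^ 3


section aux

noncomputable def Pp : Polynomial (Polynomial ℤ) := X ^ 3 - 6 * X ^ 2 + 3 * X + 1
noncomputable def Qq : Polynomial (Polynomial ℤ) := fpoly X (C (X : Polynomial ℤ))

lemma hQ : Qq = C (-X^2 + X - 1) * X^3 + C (6*X^2 - 3*X) * X^2 + C (-6*X^2 + 3*X) * X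
    + C (X^3 - X^2 + X) := by
  simp only [Qq, fpoly, map_add, map_sub, map_neg, map_mul, map_pow, map_one, map_ofNat]
  ring

lemma hPdeg : Pp.natDegree = 3 := by
  unfold Pp; compute_degree!

lemma hQdeg : Qq.natDegree = 3 := by
  rw [hQ]; compute_degree!
  · intro h
    have := congrArg (fun p => Polynomial.coeff p 2) h
    simp [coeff_X, coeff_one] at this

lemma hQ0 : Qq.coeff 0 = X^3 - X^2 + X := by
  rw [hQ]; simp only [coeff_add, coeff_C_mul, coeff_X_pow, coeff_X, coeff_C]; norm_num
lemma hQ1 : Qq.coeff 1 = -6*X^2 + 3*X := by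
  rw [hQ]; simp only [coeff_add, coeff_C_mul, coeff_X_pow, coeff_X, coeff_C]; norm_num
lemma hQ2 : Qq.coeff 2 = 6*X^2 - 3*X := by
  rw [hQ]; simp only [coeff_add, coeff_C_mul, coeff_X_pow, coeff_X, coeff_C]; norm_num
lemma hQ3 : Qq.coeff 3 = -X^2 + X - 1 := by
  rw [hQ]; simp only [coeff_add, coeff_C_mul, coeff_X_pow, coeff_X, coeff_C]; norm_num

lemma hPc : Pp = C 1 * X^3 + C (-6) * X^2 + C 3 * X + C 1 := by
  unfold Pp; simp only [map_one, map_neg, map_ofNat]; ring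
lemma hP0 : Pp.coeff 0 = 1 := by
  rw [hPc]; simp only [coeff_add, coeff_C_mul, coeff_X_pow, coeff_X, coeff_C]; norm_num
lemma hP1 : Pp.coeff 1 = 3 := by
  rw [hPc]; simp only [coeff_add, coeff_C_mul, coeff_X_pow, coeff_X, coeff_C]; norm_num
lemma hP2 : Pp.coeff 2 = -6 := by
  rw [hPc]; simp only [coeff_add, coeff_C_mul, coeff_X_pow, coeff_X, coeff_C]; norm_num
lemma hP3 : Pp.coeff 3 = 1 := by
  rw [hPc]; simp only [coeff_add, coeff_C_mul, coeff_X_pow, coeff_X, coeff_C]; norm_num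


set_option maxHeartbeats 1000000 in
set_option maxRecDepth 20000 in
set_option maxHeartbeats 4000000 in
set_option maxRecDepth 20000 in
lemma detgen {R : Type*} [CommRing R] (a b c d : R) : Matrix.det
    !![1,-6,3,1,0,0; 0,1,-6,3,1,0; 0,0,1,-6,3,1;
       a, b, c, d, 0,0;
       0, a, b, c, d, 0;
       0, 0, a, b, c, d] =
    -a^3 + 3*a^2*b - 21*a^2*c + 84*a^2*d + 6*a*b^2 - 21*a*b*c + 129*a*b*d - 30*a*c^2
      + 96*a*c*d + 159*a*d^2 + b^3 - 3*b^2*c + 21*b^2*d - 6*b*c^2 + 21*b*c*d + 30*b*d^2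
      - c^3 + 3*c^2*d + 6*c*d^2 + d^3 := by
  simp [Matrix.det_succ_row_zero, Fin.sum_univ_succ, Fin.succAbove]
  ring

lemma cv5 {R : Type*} (x : R) (u : Fin 5 → R) : Matrix.vecCons x u 5 = u 4 := rfl
lemma cv4 {R : Type*} (x : R) (u : Fin 4 → R) : Matrix.vecCons x u (4 : Fin 5) = u 3 := rfl
lemma cv3 {R : Type*} (x : R) (u : Fin 3 → R) : Matrix.vecCons x u (3 : Fin 4) = u 2 := rfl
lemma cv2 {R : Type*} (x : R) (u : Fin 2 → R) : Matrix.vecCons x u (2 : Fin 3) = u 1 := rfl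
lemma cv1 {R : Type*} (x : R) (u : Fin 1 → R) : Matrix.vecCons x u (1 : Fin 2) = u 0 := rfl

lemma v3 : ((3 : Fin 6) : ℕ) = 3 := rfl
lemma v4 : ((4 : Fin 6) : ℕ) = 4 := rfl
lemma v5 : ((5 : Fin 6) : ℕ) = 5 := rfl

end aux

set_option maxHeartbeats 2000000 in
set_option maxRecDepth 20000 in
/-- Viewing `z³ − 6z² + 3z + 1` and `f(z,w)` as polynomials in `z` over `ℤ[w]` (so below
the outer variable is `z` and the inner variable is `w`),
`Res_z(z³ − 6z² + 3z + 1, f(z,w)) = (w³ − 6w² + 3w + 1)³`. -/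
theorem statement8 :
    _root_.resultant
      ((Polynomial.X : Polynomial (Polynomial ℤ)) ^ 3 - 6 * Polynomial.X ^ 2
        + 3 * Polynomial.X + 1)
      (fpoly Polynomial.X (Polynomial.C (Polynomial.X : Polynomial ℤ))) =
    ((Polynomial.X : Polynomial ℤ) ^ 3 - 6 * Polynomial.X ^ 2 + 3 * Polynomial.X + 1) ^ 3 := by
  have h6 : Pp.natDegree + Qq.natDegree = 6 := by rw [hPdeg, hQdeg]
  show (_root_.sylvester Pp Qq).det = _
  rw [← Matrix.det_reindex_self (finCongr h6) (_root_.sylvester Pp Qq)]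
  have hM : (Matrix.reindex (finCongr h6) (finCongr h6)) (_root_.sylvester Pp Qq) =
    !![1,-6,3,1,0,0; 0,1,-6,3,1,0; 0,0,1,-6,3,1;
       -X^2+X-1, 6*X^2-3*X, -6*X^2+3*X, X^3-X^2+X, 0,0;
       0, -X^2+X-1, 6*X^2-3*X, -6*X^2+3*X, X^3-X^2+X, 0;
       0, 0, -X^2+X-1, 6*X^2-3*X, -6*X^2+3*X, X^3-X^2+X] := by
    refine Matrix.ext fun i j => ?_
    fin_cases i <;> fin_cases j <;>
      simp [_root_.sylvester, Matrix.reindex_apply, hPdeg, hQdeg, hP0, hP1, hP2, hP3,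
        hQ0, hQ1, hQ2, hQ3, Fin.coe_cast, v3, v4, v5, cv5, cv4, cv3, cv2, cv1, Matrix.vecHead, Matrix.vecTail, -Fin.val_fin_le]
  rw [hM, detgen]
  ring
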